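/- Let $K$ be a ring of prime characteristic $p$ containing an element $b$, such that $K$ is finitely generated as a module over the subring $\mathbb{Z}\langle b \rangle$ generated by $b$. Then for every $a \in K$ and every subring $A \subseteq K$ with $b \in A$ and $a \notin A$, there exists a finite ring $F$ and a homomorphism $\varphi : K \to F$ with $\varphi(a) \notin \varphi(A)$. -/

import Mathlib

open scoped Pointwise

/-- A (not necessarily unital) ring `K` is finitely separable if every element `a`
lying outside a subring `A` can be separated from `A` by a homomorphism to a finite ring. -/
def IsFinSep (K : Type) [NonUnitalRing K] : Prop :=
  ∀ (a : K) (A : NonUnitalSubring K), a ∉ A →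
    ∃ (F : Type) (_ : NonUnitalRing F) (_ : Finite F),
      ∃ φ : K →ₙ+* F, φ a ∉ ⇑φ '' (A : Set K)

/-- `ppow a n = a ^ (n + 1)`, the positive powers of `a` in a non-unital ring. -/
def ppow {K : Type} [NonUnitalRing K] (a : K) : ℕ → K
  | 0 => a
  | n + 1 => ppow a n * a

/-- Evaluation of an integer polynomial (whose constant term is ignored, hence
meaningful for polynomials with zero constant term) at an element of a non-unital ring. -/
def evalnc {K : Type} [NonUnitalRing K] (p : Polynomial ℤ) (a : K) : K :=
  ∑ i ∈ Finset.range p.natDegree, p.coeff (i + 1) • ppow a i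

section Aux

open Polynomial DirectSum

/-- Elements of the non-unital subring generated by `b` act as polynomial scalars,
given a module structure where `X` acts as left multiplication by `b`. -/
lemma aux_closure_smul {p : ℕ} {K : Type} [NonUnitalRing K]
    [Module (Polynomial (ZMod p)) K] {b : K}
    (hX : ∀ x : K, (X : Polynomial (ZMod p)) • x = b * x) :
    ∀ u ∈ NonUnitalSubring.closure ({b} : Set K),
      ∃ q : Polynomial (ZMod p), ∀ w : K, u * w = q • w := by
  intro u hu
  induction hu using NonUnitalSubring.closure_induction with
  | mem x hx =>
    rw [Set.mem_singleton_iff] at hx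
    subst hx
    exact ⟨X, fun w => (hX w).symm⟩
  | zero => exact ⟨0, fun w => by simp⟩
  | add x y _ _ hx hy =>
    obtain ⟨q1, h1⟩ := hx
    obtain ⟨q2, h2⟩ := hy
    exact ⟨q1 + q2, fun w => by rw [add_mul, h1, h2, add_smul]⟩
  | neg x _ hx =>
    obtain ⟨q, h⟩ := hx
    exact ⟨-q, fun w => by rw [neg_mul, h, neg_smul]⟩
  | mul x y _ _ hx hy =>
    obtain ⟨q1, h1⟩ := hx
    obtain ⟨q2, h2⟩ := hy
    exact ⟨q1 * q2, fun w => by rw [mul_assoc, h2, h1, mul_smul]⟩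

/-- Residual finiteness of finitely generated modules over `(ZMod p)[X]`:
any nonzero element maps to a nonzero element of some finite module. -/
lemma aux_sep (p : ℕ) (hp : p.Prime) {M : Type} [AddCommGroup M]
    [Module (Polynomial (ZMod p)) M] [Module.Finite (Polynomial (ZMod p)) M]
    (x : M) (hx : x ≠ 0) :
    ∃ (T : Type) (_ : AddCommGroup T) (_ : Module (Polynomial (ZMod p)) T) (_ : Finite T),
      ∃ f : M →ₗ[Polynomial (ZMod p)] T, f x ≠ 0 := by
  haveI : Fact p.Prime := ⟨hp⟩
  have hfin : ∀ g : Polynomial (ZMod p), g ≠ 0 →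
      Finite (Polynomial (ZMod p) ⧸ (Ideal.span {g})) := by
    intro g hg
    haveI : Module.Finite (ZMod p) (AdjoinRoot g) :=
      Module.Finite.of_basis (AdjoinRoot.powerBasis hg).basis
    have : Finite (AdjoinRoot g) := Module.finite_of_finite (ZMod p)
    exact this
  obtain ⟨n, ι, hι, pi, hirr, e, ⟨eqv⟩⟩ :=
    Module.equiv_free_prod_directSum (R := Polynomial (ZMod p)) (M := M)
  haveI : Fintype ι := hι
  haveI : ∀ i : ι, Finite (Polynomial (ZMod p) ⧸ (Ideal.span {pi i ^ e i})) := fun i =>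
    hfin _ (pow_ne_zero _ (hirr i).ne_zero)
  by_cases h2 : (eqv x).2 = 0
  · -- the free part must be nonzero
    have hne : eqv x ≠ 0 := by
      simpa using (LinearEquiv.map_ne_zero_iff eqv).mpr hx
    have h1 : (eqv x).1 ≠ 0 := by
      intro h1
      exact hne (Prod.ext h1 h2)
    obtain ⟨j, hj⟩ : ∃ j, (eqv x).1 j ≠ 0 := by
      by_contra hc
      push_neg at hc
      exact h1 (Finsupp.ext hc)
    set c : Polynomial (ZMod p) := (eqv x).1 j with hc
    set g : Polynomial (ZMod p) := X ^ (c.natDegree + 1) with hgdef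
    have hg : g ≠ 0 := pow_ne_zero _ X_ne_zero
    refine ⟨Polynomial (ZMod p) ⧸ (Ideal.span {g}), inferInstance, inferInstance, hfin g hg,
      (Ideal.span {g} : Ideal (Polynomial (ZMod p))).mkQ.comp
        ((Finsupp.lapply j).comp ((LinearMap.fst _ _ _).comp eqv.toLinearMap)), ?_⟩
    intro h0
    simp only [LinearMap.comp_apply, LinearMap.fst_apply, Finsupp.lapply_apply,
      LinearEquiv.coe_coe, Submodule.mkQ_apply, Submodule.Quotient.mk_eq_zero] at h0
    rw [Ideal.mem_span_singleton] at h0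
    have hle := Polynomial.natDegree_le_of_dvd h0 hj
    rw [hgdef, Polynomial.natDegree_X_pow, ← hc] at hle
    omega
  · -- the torsion part is nonzero
    haveI : Finite (⨁ (i : ι), Polynomial (ZMod p) ⧸ (Ideal.span {pi i ^ e i})) :=
      Finite.of_equiv _ (DFinsupp.equivFunOnFintype).symm
    refine ⟨_, inferInstance, inferInstance, ‹_›,
      (LinearMap.snd _ _ _).comp eqv.toLinearMap, ?_⟩
    simpa using h2

end Aux

/-- A ring of prime characteristic `p` that is a finitely generated module over a
monogenic subring `ℤ⟨b⟩` is finitely separable from subrings containing `b`. -/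
theorem stmt15 (K : Type) [NonUnitalRing K] (p : ℕ) (hp : p.Prime)
    (hchar : ∀ x : K, p • x = 0) (b : K)
    (hfg : ∃ s : Finset K, ∀ x : K,
      x ∈ AddSubgroup.closure
        ((s : Set K) ∪ (NonUnitalSubring.closure {b} : Set K) * (s : Set K)))
    (a : K) (A : NonUnitalSubring K) (hbA : b ∈ A) (haA : a ∉ A) :
    ∃ (F : Type) (_ : NonUnitalRing F) (_ : Finite F),
      ∃ φ : K →ₙ+* F, φ a ∉ ⇑φ '' (A : Set K) := by
  classical
  haveI : Fact p.Prime := ⟨hp⟩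
  obtain ⟨s, hs⟩ := hfg
  obtain ⟨instZ⟩ : Nonempty (Module (ZMod p) K) := ⟨AddCommGroup.zmodModule hchar⟩
  letI := instZ
  -- left multiplication by `b` as a `ZMod p`-linear endomorphism
  let Lb : Module.End (ZMod p) K :=
    { toFun := fun x => b * x
      map_add' := fun x y => mul_add b x y
      map_smul' := fun c x => ZMod.map_smul (AddMonoidHom.mulLeft b) c x }
  let aevalHom : Polynomial (ZMod p) →+* Module.End (ZMod p) K :=
    (Polynomial.aeval Lb).toRingHom
  letI instR : Module (Polynomial (ZMod p)) K :=
    Module.compHom (R := Module.End (ZMod p) K) K aevalHom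
  have hsmul : ∀ (q : Polynomial (ZMod p)) (x : K), q • x = Polynomial.aeval Lb q x :=
    fun _ _ => rfl
  have hX : ∀ x : K, (Polynomial.X : Polynomial (ZMod p)) • x = b * x := by
    intro x
    rw [hsmul, Polynomial.aeval_X]
    rfl
  have hC : ∀ (c : ZMod p) (x : K), (Polynomial.C c : Polynomial (ZMod p)) • x = c • x := by
    intro c x
    rw [hsmul, Polynomial.aeval_C, Module.algebraMap_end_apply]
  have hclosK := aux_closure_smul (p := p) hX
  -- `A` is a submodule
  have hXpow : ∀ (n : ℕ) (x : K), x ∈ A → ((Polynomial.X : Polynomial (ZMod p)) ^ n) • x ∈ A := by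
    intro n
    induction n with
    | zero => intro x hx; simpa using hx
    | succ n ih =>
      intro x hx
      rw [pow_succ', mul_smul, hX]
      exact A.mul_mem hbA (ih _ hx)
  let Asub : Submodule (Polynomial (ZMod p)) K :=
    { carrier := (A : Set K)
      add_mem' := fun hx hy => A.add_mem hx hy
      zero_mem' := A.zero_mem
      smul_mem' := by
        intro q x hx
        induction q using Polynomial.induction_on' with
        | add f g hf hg => rw [add_smul]; exact A.add_mem hf hg
        | monomial n c =>
          rw [← Polynomial.C_mul_X_pow_eq_monomial, mul_smul, hC]
          exact ZMod.smul_mem (hXpow n x hx) c }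
  have hmemA : ∀ x : K, x ∈ Asub ↔ x ∈ A := fun x => Iff.rfl
  -- `K` is finitely generated over `(ZMod p)[X]`
  haveI : Module.Finite (Polynomial (ZMod p)) K := by
    refine ⟨⟨s, Submodule.eq_top_iff'.mpr ?_⟩⟩
    intro x
    have hle : AddSubgroup.closure
        ((s : Set K) ∪ (NonUnitalSubring.closure {b} : Set K) * (s : Set K)) ≤
        (Submodule.span (Polynomial (ZMod p)) (s : Set K)).toAddSubgroup := by
      rw [AddSubgroup.closure_le]
      rintro y (hy | ⟨u, hu, c, hc, rfl⟩)
      · exact Submodule.subset_span hy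
      · obtain ⟨q, hq⟩ := hclosK u hu
        show u * c ∈ _
        rw [hq]
        exact Submodule.smul_mem _ q (Submodule.subset_span hc)
    exact hle (hs x)
  -- separate `a` from `A` by a linear map to a finite module
  have hx0 : Asub.mkQ a ≠ 0 := by
    rw [Submodule.mkQ_apply, ne_eq, Submodule.Quotient.mk_eq_zero]
    exact fun h => haA ((hmemA a).mp h)
  obtain ⟨T, _, _, _, ψ, hψ⟩ := aux_sep p hp (Asub.mkQ a) hx0
  set f : K →ₗ[Polynomial (ZMod p)] T := ψ.comp Asub.mkQ with hfdef
  have hfa : f a ≠ 0 := hψ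
  have hfA : ∀ α ∈ A, f α = 0 := by
    intro α hα
    have : Asub.mkQ α = 0 := by
      rw [Submodule.mkQ_apply, Submodule.Quotient.mk_eq_zero]
      exact (hmemA α).mpr hα
    rw [hfdef, LinearMap.comp_apply, this, map_zero]
  -- the kernel subgroup
  let g : K →+ T × ({c // c ∈ s} → T) :=
    AddMonoidHom.mk' (fun x => (f x, fun c => f (c.1 * x))) (by
      intro x y
      simp [mul_add, map_add, Prod.ext_iff, funext_iff])
  let L : AddSubgroup K := g.ker
  have hL : ∀ x : K, x ∈ L ↔ f x = 0 ∧ ∀ c : {c // c ∈ s}, f (c.1 * x) = 0 := by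
    intro x
    rw [AddMonoidHom.mem_ker]
    constructor
    · intro h
      constructor
      · exact congrArg Prod.fst h
      · intro c
        exact congrFun (congrArg Prod.snd h) c
    · intro ⟨h1, h2⟩
      exact Prod.ext h1 (funext h2)
  -- the key claim: L is a left ideal
  have key : ∀ x : K, f x = 0 → (∀ c : {c // c ∈ s}, f (c.1 * x) = 0) →
      ∀ y : K, f (y * x) = 0 := by
    intro x h0 hc y
    have hle : AddSubgroup.closure
        ((s : Set K) ∪ (NonUnitalSubring.closure {b} : Set K) * (s : Set K)) ≤
        (f.toAddMonoidHom.comp (AddMonoidHom.mulRight x)).ker := by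
      rw [AddSubgroup.closure_le]
      rintro z (hz | ⟨u, hu, c, hcs, rfl⟩)
      · have : f (z * x) = 0 := hc ⟨z, hz⟩
        simpa [AddMonoidHom.mem_ker] using this
      · obtain ⟨q, hq⟩ := hclosK u hu
        have : f (u * c * x) = 0 := by
          rw [mul_assoc, hq, map_smul, hc ⟨c, hcs⟩, smul_zero]
        simpa [AddMonoidHom.mem_ker] using this
    have := hle (hs y)
    simpa [AddMonoidHom.mem_ker] using this
  have hLmul : ∀ (y : K), ∀ x ∈ L, y * x ∈ L := by
    intro y x hx
    rw [hL] at hx ⊢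
    obtain ⟨h0, hc⟩ := hx
    refine ⟨key x h0 hc y, fun c => ?_⟩
    rw [← mul_assoc]
    exact key x h0 hc (c.1 * y)
  -- the finite quotient
  haveI : Finite (K ⧸ L) :=
    Finite.of_equiv _ (QuotientAddGroup.quotientKerEquivRange g).toEquiv.symm
  let πL : K →+ K ⧸ L := QuotientAddGroup.mk' L
  let Mx : K → ((K ⧸ L) →+ (K ⧸ L)) := fun x =>
    QuotientAddGroup.map L L (AddMonoidHom.mulLeft x) (fun z hz => hLmul x z hz)
  have hMx : ∀ (x z : K), Mx x (πL z) = πL (x * z) := fun x z => rfl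
  -- the homomorphism into the endomorphism ring
  let φ₀ : K → AddMonoid.End ((K ⧸ L) × ZMod p) := fun x =>
    AddMonoidHom.mk' (fun qc => (Mx x qc.1 + πL (qc.2 • x), 0)) (by
      intro qc qc'
      refine Prod.ext ?_ ?_
      · show Mx x (qc.1 + qc'.1) + πL ((qc.2 + qc'.2) • x) =
          (Mx x qc.1 + πL (qc.2 • x)) + (Mx x qc'.1 + πL (qc'.2 • x))
        rw [map_add, add_smul, map_add]
        abel
      · show (0 : ZMod p) = 0 + 0
        rw [add_zero])
  have hφ₀ : ∀ (x : K) (q : K ⧸ L) (c : ZMod p),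
      φ₀ x (q, c) = (Mx x q + πL (c • x), 0) := fun _ _ _ => rfl
  have hmul : ∀ x y : K, φ₀ (x * y) = φ₀ x * φ₀ y := by
    intro x y
    refine AddMonoid.End.ext _ fun qc => ?_
    obtain ⟨q, c⟩ := qc
    refine QuotientAddGroup.induction_on q (fun z => ?_)
    have hrhs : (φ₀ x * φ₀ y) (((z : K ⧸ L)), c) = φ₀ x (φ₀ y ((z : K ⧸ L), c)) := rfl
    have hz : ((z : K ⧸ L)) = πL z := rfl
    rw [hrhs, hz, hφ₀, hφ₀, hMx, hφ₀, hMx, map_add, hMx, hMx]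
    have h1 : x * y * z = x * (y * z) := mul_assoc x y z
    have h2 : c • (x * y) = x * (c • y) := (ZMod.map_smul (AddMonoidHom.mulLeft x) c y).symm
    have h3 : (0 : ZMod p) • x = 0 := zero_smul _ _
    rw [h1, h2, h3, map_zero, add_zero]
  have hadd : ∀ x y : K, φ₀ (x + y) = φ₀ x + φ₀ y := by
    intro x y
    refine AddMonoid.End.ext _ fun qc => ?_
    obtain ⟨q, c⟩ := qc
    refine QuotientAddGroup.induction_on q (fun z => ?_)
    have hrhs : (φ₀ x + φ₀ y) (((z : K ⧸ L)), c) = φ₀ x ((z : K ⧸ L), c) + φ₀ y ((z : K ⧸ L), c) :=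
      rfl
    have hz : ((z : K ⧸ L)) = πL z := rfl
    rw [hrhs, hz, hφ₀, hφ₀, hφ₀, hMx, hMx, hMx]
    rw [add_mul, smul_add, map_add, map_add, Prod.mk_add_mk, add_zero]
    congr 1
    abel
  have hzero : φ₀ 0 = 0 := by
    refine AddMonoid.End.ext _ fun qc => ?_
    obtain ⟨q, c⟩ := qc
    refine QuotientAddGroup.induction_on q (fun z => ?_)
    have hz : ((z : K ⧸ L)) = πL z := rfl
    rw [hz, hφ₀, hMx, zero_mul, smul_zero, map_zero, zero_add]
    rfl
  let φ : K →ₙ+* AddMonoid.End ((K ⧸ L) × ZMod p) :=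
    { toFun := φ₀
      map_mul' := hmul
      map_zero' := hzero
      map_add' := hadd }
  haveI : Finite ((K ⧸ L) × ZMod p) := inferInstance
  haveI : Finite (AddMonoid.End ((K ⧸ L) × ZMod p)) :=
    Finite.of_injective (fun h => (h : (K ⧸ L) × ZMod p → (K ⧸ L) × ZMod p))
      DFunLike.coe_injective
  refine ⟨AddMonoid.End ((K ⧸ L) × ZMod p), inferInstance, inferInstance, φ, ?_⟩
  rintro ⟨α, hα, heq⟩
  have hφa : φ a (0, 1) = (πL a, 0) := by
    show φ₀ a (0, 1) = (πL a, 0)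
    rw [hφ₀, map_zero, one_smul, zero_add]
  have hφα : φ α (0, 1) = (πL α, 0) := by
    show φ₀ α (0, 1) = (πL α, 0)
    rw [hφ₀, map_zero, one_smul, zero_add]
  have : πL α = πL a := by
    have := congrArg (fun (h : AddMonoid.End ((K ⧸ L) × ZMod p)) => h (0, 1)) heq
    rw [hφα, hφa] at this
    exact congrArg Prod.fst this
  have hsub : α - a ∈ L := by
    rwa [← QuotientAddGroup.eq_iff_sub_mem]
  have hfsub : f (α - a) = 0 := ((hL _).mp hsub).1
  rw [map_sub, hfA α hα, zero_sub, neg_eq_zero] at hfsub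
  exact hfa hfsub
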